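/- Let A : ℝ → gl_n(ℝ) satisfy A' = -tr(S(A)²)·A + (1/2)[A,[A,Aᵗ]] - (1/2)tr(A)·[A,Aᵗ] with A(t) ≠ 0 for all t, and let B = A/‖A‖. Then (d/dt)‖[B,Bᵗ]‖² = 2‖A‖²·(‖[B,Bᵗ]‖⁴ - ‖[B,[B,Bᵗ]]‖²) ≤ 0; i.e. F(B) = ‖[B,Bᵗ]‖² is non-increasing along the normalized flow. -/

import Mathlib

open Matrix Filter

noncomputable section

abbrev Mat (n : ℕ) := Matrix (Fin n) (Fin n) ℝ

/-- Commutator bracket of matrices. -/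
def bkt {n : ℕ} (X Y : Mat n) : Mat n := X * Y - Y * X

/-- Frobenius inner product ⟨X,Y⟩ = tr(XYᵗ). -/
def frob {n : ℕ} (X Y : Mat n) : ℝ := Matrix.trace (X * Yᵀ)

/-- Squared Frobenius norm ‖X‖² = tr(XXᵗ). -/
def sqnorm {n : ℕ} (X : Mat n) : ℝ := frob X X

/-- Symmetric part S(X) = (X+Xᵗ)/2. -/
def symPart {n : ℕ} (X : Mat n) : Mat n := (1/2 : ℝ) • (X + Xᵀ)

/-- Right-hand side of the bracket flow ODE. -/
def rhs {n : ℕ} (A : Mat n) : Mat n :=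
  (-(Matrix.trace (symPart A * symPart A))) • A
    + (1/2 : ℝ) • bkt A (bkt A Aᵀ)
    - ((1/2 : ℝ) * Matrix.trace A) • bkt A Aᵀ

namespace Aux17

variable {n : ℕ}

lemma frob_eq (X Y : Mat n) : frob X Y = ∑ i, ∑ j, X i j * Y i j := by
  simp [frob, Matrix.trace, Matrix.diag, Matrix.mul_apply]

lemma frob_comm (X Y : Mat n) : frob X Y = frob Y X := by
  simp only [frob_eq]
  exact Finset.sum_congr rfl fun i _ => Finset.sum_congr rfl fun j _ => mul_comm _ _

lemma frob_transpose (X Y : Mat n) : frob Xᵀ Yᵀ = frob X Y := by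
  simp only [frob_eq, Matrix.transpose_apply]
  rw [Finset.sum_comm]

lemma frob_add_right (X Y Z : Mat n) : frob X (Y + Z) = frob X Y + frob X Z := by
  simp [frob_eq, mul_add, Finset.sum_add_distrib]

lemma frob_sub_right (X Y Z : Mat n) : frob X (Y - Z) = frob X Y - frob X Z := by
  simp [frob_eq, mul_sub, Finset.sum_sub_distrib]

lemma frob_smul_right (c : ℝ) (X Y : Mat n) : frob X (c • Y) = c * frob X Y := by
  simp [frob_eq, Finset.mul_sum, mul_left_comm]

lemma frob_zero_right (X : Mat n) : frob X (0 : Mat n) = 0 := by simp [frob_eq]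

lemma frob_neg_right (X Y : Mat n) : frob X (-Y) = - frob X Y := by
  simp [frob_eq, Finset.sum_neg_distrib]

lemma bkt_self (X : Mat n) : bkt X X = 0 := by simp [bkt]

lemma bkt_antisymm (X Y : Mat n) : bkt X Y = - bkt Y X := by simp [bkt]

lemma frob_bkt₁ (X Y Z : Mat n) : frob X (bkt Y Z) = frob (bkt X Zᵀ) Y := by
  simp only [frob, bkt, Matrix.transpose_sub, Matrix.transpose_mul, Matrix.mul_sub,
    Matrix.sub_mul, Matrix.trace_sub, Matrix.mul_assoc]
  rw [Matrix.trace_mul_comm (Zᵀ) (X * Yᵀ), Matrix.mul_assoc]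

lemma frob_bkt₂ (X Y Z : Mat n) : frob X (bkt Y Z) = frob (bkt Yᵀ X) Z := by
  simp only [frob, bkt, Matrix.transpose_sub, Matrix.transpose_mul, Matrix.mul_sub,
    Matrix.sub_mul, Matrix.trace_sub, Matrix.mul_assoc]
  rw [Matrix.trace_mul_comm Yᵀ (X * Zᵀ), Matrix.mul_assoc]

lemma C_symm (M : Mat n) : (bkt M Mᵀ)ᵀ = bkt M Mᵀ := by
  simp [bkt, Matrix.transpose_sub, Matrix.transpose_mul]

lemma frob_MC (M : Mat n) : frob M (bkt M Mᵀ) = 0 := by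
  have h1 : frob M (bkt M Mᵀ) = frob (bkt Mᵀ M) Mᵀ := frob_bkt₂ M M Mᵀ
  have h2 : bkt Mᵀ M = - bkt M Mᵀ := by simp [bkt]
  have h3 : frob (bkt M Mᵀ) Mᵀ = frob M (bkt M Mᵀ) := by
    rw [frob_comm]
    calc frob Mᵀ (bkt M Mᵀ) = frob Mᵀ (bkt M Mᵀ)ᵀ := by rw [C_symm]
    _ = frob M (bkt M Mᵀ) := frob_transpose M (bkt M Mᵀ)
  have h4 : frob M (bkt M Mᵀ) = - frob M (bkt M Mᵀ) := by
    calc frob M (bkt M Mᵀ) = frob (-(bkt M Mᵀ)) Mᵀ := by rw [h1, h2]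
      _ = - frob (bkt M Mᵀ) Mᵀ := by rw [frob_comm, frob_neg_right, frob_comm]
      _ = - frob M (bkt M Mᵀ) := by rw [h3]
  linarith

lemma frob_MK (M : Mat n) :
    frob M (bkt M (bkt M Mᵀ)) = - sqnorm (bkt M Mᵀ) := by
  have h1 : frob M (bkt M (bkt M Mᵀ)) = frob (bkt Mᵀ M) (bkt M Mᵀ) :=
    frob_bkt₂ M M (bkt M Mᵀ)
  have h2 : bkt Mᵀ M = - bkt M Mᵀ := by simp [bkt]
  rw [h1, h2, frob_comm, frob_neg_right, ← frob_comm]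
  rfl

lemma frob_KC (M : Mat n) :
    frob (bkt M (bkt M Mᵀ)) (bkt M Mᵀ) = 0 := by
  rw [frob_comm]
  have h1 : frob (bkt M Mᵀ) (bkt M (bkt M Mᵀ)) = frob (bkt (bkt M Mᵀ) (bkt M Mᵀ)ᵀ) M :=
    frob_bkt₁ _ M _
  rw [h1, C_symm, bkt_self]
  rw [frob_comm, frob_zero_right]

/-- ⟨C, [D,Mᵀ]⟩ = -⟨K,D⟩ -/
lemma frob_C_bkt_D (M D : Mat n) :
    frob (bkt M Mᵀ) (bkt D Mᵀ) = - frob (bkt M (bkt M Mᵀ)) D := by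
  have h1 : frob (bkt M Mᵀ) (bkt D Mᵀ) = frob (bkt (bkt M Mᵀ) Mᵀᵀ) D :=
    frob_bkt₁ _ D Mᵀ
  rw [h1, Matrix.transpose_transpose]
  rw [show bkt (bkt M Mᵀ) M = - bkt M (bkt M Mᵀ) from bkt_antisymm _ _]
  rw [frob_comm, frob_neg_right, frob_comm]

/-- ⟨C, [M,Dᵀ]⟩ = -⟨K,D⟩ -/
lemma frob_C_bkt_D' (M D : Mat n) :
    frob (bkt M Mᵀ) (bkt M Dᵀ) = - frob (bkt M (bkt M Mᵀ)) D := by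
  have h1 : frob (bkt M Mᵀ) (bkt M Dᵀ) = frob (bkt Mᵀ (bkt M Mᵀ)) Dᵀ :=
    frob_bkt₂ _ M Dᵀ
  have h2 : bkt Mᵀ (bkt M Mᵀ) = - (bkt M (bkt M Mᵀ))ᵀ := by
    rw [show (bkt M (bkt M Mᵀ))ᵀ = bkt (bkt M Mᵀ)ᵀ Mᵀ by
      simp [bkt, Matrix.transpose_sub, Matrix.transpose_mul]]
    rw [C_symm, bkt_antisymm]
  rw [h1, h2]
  rw [show frob (-(bkt M (bkt M Mᵀ))ᵀ) Dᵀ = - frob (bkt M (bkt M Mᵀ))ᵀ Dᵀ by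
    rw [frob_comm, frob_neg_right, frob_comm]]
  rw [frob_transpose]

lemma frob_M_rhs (M : Mat n) :
    frob M (rhs M) = -(Matrix.trace (symPart M * symPart M)) * sqnorm M
      - sqnorm (bkt M Mᵀ) / 2 := by
  rw [rhs, frob_sub_right, frob_add_right, frob_smul_right, frob_smul_right,
    frob_smul_right, frob_MK, frob_MC]
  rw [show frob M M = sqnorm M from rfl]
  ring

lemma frob_K_rhs (M : Mat n) :
    frob (bkt M (bkt M Mᵀ)) (rhs M) =
      Matrix.trace (symPart M * symPart M) * sqnorm (bkt M Mᵀ)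
        + sqnorm (bkt M (bkt M Mᵀ)) / 2 := by
  rw [rhs, frob_sub_right, frob_add_right, frob_smul_right, frob_smul_right,
    frob_smul_right, frob_KC]
  rw [show frob (bkt M (bkt M Mᵀ)) M = frob M (bkt M (bkt M Mᵀ)) from frob_comm _ _,
    frob_MK]
  rw [show frob (bkt M (bkt M Mᵀ)) (bkt M (bkt M Mᵀ)) = sqnorm (bkt M (bkt M Mᵀ)) from rfl]
  ring

lemma sqnorm_nonneg (X : Mat n) : 0 ≤ sqnorm X := by
  rw [sqnorm, frob_eq]
  exact Finset.sum_nonneg fun i _ => Finset.sum_nonneg fun j _ => mul_self_nonneg _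

lemma sqnorm_pos (X : Mat n) (h : X ≠ 0) : 0 < sqnorm X := by
  rcases lt_or_eq_of_le (sqnorm_nonneg X) with h' | h'
  · exact h'
  · exfalso; apply h
    ext i j
    rw [sqnorm, frob_eq] at h'
    have h0 := (Finset.sum_eq_zero_iff_of_nonneg
      (fun i _ => Finset.sum_nonneg fun j _ => mul_self_nonneg (X i j))).1 h'.symm
      i (Finset.mem_univ i)
    have h1 := (Finset.sum_eq_zero_iff_of_nonneg
      (fun j _ => mul_self_nonneg (X i j))).1 h0 j (Finset.mem_univ j)
    simpa [mul_self_eq_zero] using h1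

lemma cauchy_schwarz (X Y : Mat n) : (frob X Y)^2 ≤ sqnorm X * sqnorm Y := by
  rw [sqnorm, sqnorm, frob_eq, frob_eq, frob_eq]
  rw [← Finset.sum_product', ← Finset.sum_product', ← Finset.sum_product']
  have := Finset.sum_mul_sq_le_sq_mul_sq (Finset.univ ×ˢ Finset.univ)
    (fun p : Fin n × Fin n => X p.1 p.2) (fun p => Y p.1 p.2)
  calc (∑ p ∈ Finset.univ ×ˢ Finset.univ, X p.1 p.2 * Y p.1 p.2)^2
      ≤ (∑ p ∈ Finset.univ ×ˢ Finset.univ, (X p.1 p.2)^2) *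
        (∑ p ∈ Finset.univ ×ˢ Finset.univ, (Y p.1 p.2)^2) := this
    _ = _ := by simp [sq]

lemma bkt_smul (c d : ℝ) (X Y : Mat n) : bkt (c • X) (d • Y) = (c * d) • bkt X Y := by
  simp [bkt, Matrix.smul_mul, Matrix.mul_smul, smul_smul, smul_sub, mul_comm]

lemma sqnorm_smul (c : ℝ) (X : Mat n) : sqnorm (c • X) = c^2 * sqnorm X := by
  rw [sqnorm, sqnorm, show frob (c • X) (c • X) = frob (c • X) X * c by
    rw [frob_smul_right]; ring]
  rw [frob_comm, frob_smul_right]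
  ring

/-- entrywise derivative of a matrix product -/
lemma hasDerivAt_entry_mul {X Y : ℝ → Mat n} {X' Y' : Mat n} {t : ℝ}
    (hX : ∀ i j, HasDerivAt (fun s => X s i j) (X' i j) t)
    (hY : ∀ i j, HasDerivAt (fun s => Y s i j) (Y' i j) t) (i j : Fin n) :
    HasDerivAt (fun s => (X s * Y s) i j) ((X' * Y t + X t * Y') i j) t := by
  simp only [Matrix.mul_apply, Matrix.add_apply]
  rw [← Finset.sum_add_distrib]
  exact HasDerivAt.fun_sum fun k _ => (hX i k).fun_mul (hY k j)

lemma hasDerivAt_entry_bkt {X Y : ℝ → Mat n} {X' Y' : Mat n} {t : ℝ}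
    (hX : ∀ i j, HasDerivAt (fun s => X s i j) (X' i j) t)
    (hY : ∀ i j, HasDerivAt (fun s => Y s i j) (Y' i j) t) (i j : Fin n) :
    HasDerivAt (fun s => bkt (X s) (Y s) i j) ((bkt X' (Y t) + bkt (X t) Y') i j) t := by
  have h1 := hasDerivAt_entry_mul hX hY i j
  have h2 := hasDerivAt_entry_mul hY hX i j
  have h := h1.fun_sub h2
  have : (fun s => bkt (X s) (Y s) i j) = fun s => (X s * Y s) i j - (Y s * X s) i j := by
    funext s; simp [bkt]
  rw [this]
  refine h.congr_deriv ?_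
  simp [bkt, Matrix.add_apply, Matrix.sub_apply]
  ring

lemma hasDerivAt_frob {X Y : ℝ → Mat n} {X' Y' : Mat n} {t : ℝ}
    (hX : ∀ i j, HasDerivAt (fun s => X s i j) (X' i j) t)
    (hY : ∀ i j, HasDerivAt (fun s => Y s i j) (Y' i j) t) :
    HasDerivAt (fun s => frob (X s) (Y s)) (frob X' (Y t) + frob (X t) Y') t := by
  have key : (fun s => frob (X s) (Y s)) = fun s => ∑ i, ∑ j, X s i j * Y s i j := by
    funext s; exact frob_eq _ _
  rw [key]
  have h := HasDerivAt.fun_sum (u := Finset.univ)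
    (fun i (_ : i ∈ Finset.univ) => HasDerivAt.fun_sum (u := Finset.univ)
      (fun j (_ : j ∈ Finset.univ) => (hX i j).fun_mul (hY i j)))
  refine h.congr_deriv ?_
  rw [frob_eq, frob_eq, ← Finset.sum_add_distrib]
  exact Finset.sum_congr rfl fun i _ => by rw [← Finset.sum_add_distrib]

end Aux17

open Aux17 in
theorem stmt17 {n : ℕ} (A : ℝ → Mat n)
    (hA : ∀ t : ℝ, ∀ i j, HasDerivAt (fun s => A s i j) (rhs (A t) i j) t)
    (hne : ∀ t : ℝ, A t ≠ 0)
    (B : ℝ → Mat n) (hB : ∀ t, B t = (Real.sqrt (sqnorm (A t)))⁻¹ • A t) :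
    (∀ t : ℝ, HasDerivAt (fun s => sqnorm (bkt (B s) (B s)ᵀ))
      (2 * sqnorm (A t) *
        (sqnorm (bkt (B t) (B t)ᵀ) ^ 2 - sqnorm (bkt (B t) (bkt (B t) (B t)ᵀ)))) t) ∧
    (∀ t : ℝ, 2 * sqnorm (A t) *
        (sqnorm (bkt (B t) (B t)ᵀ) ^ 2 - sqnorm (bkt (B t) (bkt (B t) (B t)ᵀ))) ≤ 0) ∧
    Antitone (fun t => sqnorm (bkt (B t) (B t)ᵀ)) := by
  -- pointwise rewrites for B
  have hsq : ∀ s : ℝ, ((Real.sqrt (sqnorm (A s)))⁻¹)^2 = (sqnorm (A s))⁻¹ := by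
    intro s
    rw [sq, ← mul_inv, Real.mul_self_sqrt (sqnorm_nonneg (A s))]
  have keyC : ∀ s : ℝ, sqnorm (bkt (B s) (B s)ᵀ)
      = ((sqnorm (A s))⁻¹)^2 * sqnorm (bkt (A s) (A s)ᵀ) := by
    intro s
    rw [hB s, Matrix.transpose_smul, bkt_smul, sqnorm_smul]
    rw [show ((Real.sqrt (sqnorm (A s)))⁻¹ * (Real.sqrt (sqnorm (A s)))⁻¹)^2
      = (((Real.sqrt (sqnorm (A s)))⁻¹)^2)^2 by ring, hsq s]
  have keyK : ∀ s : ℝ, sqnorm (bkt (B s) (bkt (B s) (B s)ᵀ))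
      = ((sqnorm (A s))⁻¹)^3 * sqnorm (bkt (A s) (bkt (A s) (A s)ᵀ)) := by
    intro s
    rw [hB s, Matrix.transpose_smul, bkt_smul, bkt_smul, sqnorm_smul]
    rw [show ((Real.sqrt (sqnorm (A s)))⁻¹ *
        ((Real.sqrt (sqnorm (A s)))⁻¹ * (Real.sqrt (sqnorm (A s)))⁻¹))^2
      = (((Real.sqrt (sqnorm (A s)))⁻¹)^2)^3 by ring, hsq s]
  -- abbreviations at a fixed time t
  have main : ∀ t : ℝ, HasDerivAt (fun s => sqnorm (bkt (B s) (B s)ᵀ))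
      (2 * sqnorm (A t) *
        (sqnorm (bkt (B t) (B t)ᵀ) ^ 2 - sqnorm (bkt (B t) (bkt (B t) (B t)ᵀ)))) t := by
    intro t
    set M := A t with hM
    set D := rhs M with hD
    set a := sqnorm M with ha'
    set g := sqnorm (bkt M Mᵀ) with hg'
    set h := sqnorm (bkt M (bkt M Mᵀ)) with hh'
    set s := Matrix.trace (symPart M * symPart M) with hs'
    have hapos : 0 < a := sqnorm_pos M (hne t)
    have hane : a ≠ 0 := ne_of_gt hapos
    -- derivative of a(s) = sqnorm (A s)
    have hderiv_a : HasDerivAt (fun s => sqnorm (A s)) (-2*s*a - g) t := by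
      have := hasDerivAt_frob (X := A) (Y := A) (hA t) (hA t)
      have hval : frob D (A t) + frob (A t) D = -2*s*a - g := by
        rw [← hM, show frob D M = frob M D from frob_comm _ _, hD, frob_M_rhs]
        rw [← ha', ← hg', ← hs']
        ring
      rw [← hval]
      exact this
    -- entrywise derivative of C(s) = bkt (A s) (A s)ᵀ
    have hAT : ∀ i j, HasDerivAt (fun u => (A u)ᵀ i j) (Dᵀ i j) t := by
      intro i j
      simpa [Matrix.transpose_apply] using hA t j i
    have hCent : ∀ i j, HasDerivAt (fun u => bkt (A u) (A u)ᵀ i j)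
        ((bkt D Mᵀ + bkt M Dᵀ) i j) t := by
      intro i j
      exact hasDerivAt_entry_bkt (hA t) hAT i j
    -- derivative of g(s)
    have hderiv_g : HasDerivAt (fun u => sqnorm (bkt (A u) (A u)ᵀ)) (-4*s*g - 2*h) t := by
      have := hasDerivAt_frob (X := fun u => bkt (A u) (A u)ᵀ)
        (Y := fun u => bkt (A u) (A u)ᵀ) hCent hCent
      have hval : frob (bkt D Mᵀ + bkt M Dᵀ) (bkt (A t) (A t)ᵀ)
          + frob (bkt (A t) (A t)ᵀ) (bkt D Mᵀ + bkt M Dᵀ) = -4*s*g - 2*h := by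
        rw [← hM]
        rw [show frob (bkt D Mᵀ + bkt M Dᵀ) (bkt M Mᵀ)
          = frob (bkt M Mᵀ) (bkt D Mᵀ + bkt M Dᵀ) from frob_comm _ _]
        rw [frob_add_right, frob_C_bkt_D, frob_C_bkt_D', hD, frob_K_rhs]
        rw [← hg', ← hh', ← hs']
        ring
      rw [← hval]
      exact this
    -- the composed function
    have hfun : (fun u => sqnorm (bkt (B u) (B u)ᵀ))
        = fun u => ((sqnorm (A u))⁻¹)^2 * sqnorm (bkt (A u) (A u)ᵀ) := funext keyC
    rw [hfun]
    have hfinal := (((hderiv_a.fun_inv hane).fun_pow 2).fun_mul hderiv_g)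
    refine hfinal.congr_deriv ?_
    rw [keyC t, keyK t, ← hM, ← ha', ← hg', ← hh']
    field_simp
    linear_combination (2*g^2 + 4*a*g*s) * (mul_inv_cancel₀ hane)
  refine ⟨main, ?_, ?_⟩
  · intro t
    have hapos : 0 < sqnorm (A t) := sqnorm_pos _ (hne t)
    have hcs : (sqnorm (bkt (A t) (A t)ᵀ))^2
        ≤ sqnorm (A t) * sqnorm (bkt (A t) (bkt (A t) (A t)ᵀ)) := by
      have h1 := cauchy_schwarz (A t) (bkt (A t) (bkt (A t) (A t)ᵀ))
      rw [frob_MK] at h1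
      calc (sqnorm (bkt (A t) (A t)ᵀ))^2 = (-(sqnorm (bkt (A t) (A t)ᵀ)))^2 := by ring
        _ ≤ _ := h1
    rw [keyC t, keyK t]
    set a := sqnorm (A t)
    set g := sqnorm (bkt (A t) (A t)ᵀ)
    set h := sqnorm (bkt (A t) (bkt (A t) (A t)ᵀ))
    have hane : a ≠ 0 := ne_of_gt (by exact sqnorm_pos _ (hne t))
    have key : (a⁻¹^2 * g)^2 - a⁻¹^3 * h = a⁻¹^4 * (g^2 - a * h) := by
      field_simp
    rw [key]
    have h1 : g^2 - a*h ≤ 0 := by linarith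
    have h2 : (0:ℝ) ≤ 2 * a * a⁻¹^4 := by positivity
    nlinarith [mul_nonneg h2 (neg_nonneg.2 h1)]
  · apply antitone_of_deriv_nonpos
    · intro t
      exact (main t).differentiableAt
    · intro t
      rw [(main t).deriv]
      have hapos : 0 < sqnorm (A t) := sqnorm_pos _ (hne t)
      have hcs : (sqnorm (bkt (A t) (A t)ᵀ))^2
          ≤ sqnorm (A t) * sqnorm (bkt (A t) (bkt (A t) (A t)ᵀ)) := by
        have h1 := cauchy_schwarz (A t) (bkt (A t) (bkt (A t) (A t)ᵀ))
        rw [frob_MK] at h1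
        calc (sqnorm (bkt (A t) (A t)ᵀ))^2 = (-(sqnorm (bkt (A t) (A t)ᵀ)))^2 := by ring
          _ ≤ _ := h1
      rw [keyC t, keyK t]
      set a := sqnorm (A t)
      set g := sqnorm (bkt (A t) (A t)ᵀ)
      set h := sqnorm (bkt (A t) (bkt (A t) (A t)ᵀ))
      have hane : a ≠ 0 := ne_of_gt hapos
      have key : (a⁻¹^2 * g)^2 - a⁻¹^3 * h = a⁻¹^4 * (g^2 - a * h) := by
        field_simp
      rw [key]
      have h1 : g^2 - a*h ≤ 0 := by linarith
      have h2 : (0:ℝ) ≤ 2 * a * a⁻¹^4 := by positivity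
      nlinarith [mul_nonneg h2 (neg_nonneg.2 h1)]
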